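/- For any density matrix ρ and Hermitian matrix a, one has Tr(ρa²) + Tr(√ρ · a · √ρ · a) − 2(Tr(ρa))² ≥ 0, i.e. the Wigner–Yanase quadratic form is positive semidefinite. -/

import Mathlib

open Matrix
open scoped ComplexOrder

/-- The positive semidefinite square root of a positive semidefinite matrix, as defined in the
older Mathlib (`Matrix.PosSemidef.sqrt`, since removed). -/
noncomputable def Matrix.PosSemidef.sqrt {n : Type*} [Fintype n] [DecidableEq n]
    {𝕜 : Type*} [RCLike 𝕜] {A : Matrix n n 𝕜} (hA : A.PosSemidef) : Matrix n n 𝕜 :=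
  (hA.1.eigenvectorUnitary : Matrix n n 𝕜) * diagonal ((↑) ∘ Real.sqrt ∘ hA.1.eigenvalues) *
  (star hA.1.eigenvectorUnitary : Matrix n n 𝕜)

theorem sqrt_mul_self_aux {n : ℕ} {ρ : Matrix (Fin n) (Fin n) ℂ} (hρ : ρ.PosSemidef) :
    hρ.sqrt * hρ.sqrt = ρ := by
  have hU : (star hρ.1.eigenvectorUnitary : Matrix (Fin n) (Fin n) ℂ) *
      (hρ.1.eigenvectorUnitary : Matrix (Fin n) (Fin n) ℂ) = 1 := by
    simp
  have hD : diagonal (((↑) : ℝ → ℂ) ∘ Real.sqrt ∘ hρ.1.eigenvalues) *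
      diagonal (((↑) : ℝ → ℂ) ∘ Real.sqrt ∘ hρ.1.eigenvalues)
      = diagonal (RCLike.ofReal ∘ hρ.1.eigenvalues) := by
    rw [diagonal_mul_diagonal]
    congr 1
    funext i
    simp only [Function.comp_apply]
    rw [← Complex.ofReal_mul, Real.mul_self_sqrt (hρ.eigenvalues_nonneg i)]
    rfl
  conv_rhs => rw [hρ.1.spectral_theorem, Unitary.conjStarAlgAut_apply]
  unfold Matrix.PosSemidef.sqrt
  rw [← hD]
  simp only [Matrix.mul_assoc]
  rw [← Matrix.mul_assoc _ _ (diagonal _ * _), hU, Matrix.one_mul]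
  rfl

theorem sqrt_herm_aux {n : ℕ} {ρ : Matrix (Fin n) (Fin n) ℂ} (hρ : ρ.PosSemidef) :
    (hρ.sqrt)ᴴ = hρ.sqrt := by
  unfold Matrix.PosSemidef.sqrt
  simp [Matrix.star_eq_conjTranspose, conjTranspose_mul, diagonal_conjTranspose, Matrix.mul_assoc]
  congr 3
  funext i
  simp

/-- For any density matrix `ρ` with positive semidefinite square root `√ρ` and any Hermitian
matrix `a`, `Tr(ρa²) + Tr(√ρ·a·√ρ·a) − 2(Tr(ρa))² ≥ 0`: the Wigner–Yanase quadratic form is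
positive semidefinite. -/
theorem wignerYanase_form_posSemidef (n : ℕ)
    (ρ : Matrix (Fin n) (Fin n) ℂ) (hρ : ρ.PosSemidef) (htr : ρ.trace = 1)
    (a : Matrix (Fin n) (Fin n) ℂ) (ha : a.IsHermitian) :
    0 ≤ ((ρ * (a * a)).trace + (hρ.sqrt * a * hρ.sqrt * a).trace
        - 2 * ((ρ * a).trace) ^ 2).re := by
  set s := hρ.sqrt with hs
  have hss : s * s = ρ := sqrt_mul_self_aux hρ
  have hsH : sᴴ = s := sqrt_herm_aux hρ
  set t : ℂ := (ρ * a).trace with ht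
  have htstar : star t = t := by
    rw [ht, ← Matrix.trace_conjTranspose, Matrix.conjTranspose_mul, ha, hρ.1,
      Matrix.trace_mul_comm]
  set b : Matrix (Fin n) (Fin n) ℂ := a - t • 1 with hb
  have hbH : bᴴ = b := by
    rw [hb, Matrix.conjTranspose_sub, Matrix.conjTranspose_smul, Matrix.conjTranspose_one,
      ha, htstar]
  set M : Matrix (Fin n) (Fin n) ℂ := s * b + b * s with hM
  have hMH : Mᴴ = M := by
    rw [hM, Matrix.conjTranspose_add, Matrix.conjTranspose_mul, Matrix.conjTranspose_mul,
      hbH, hsH, add_comm]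
  -- trace of Mᴴ*M is nonnegative
  have hnn : (0 : ℂ) ≤ (Mᴴ * M).trace := by
    rw [Matrix.trace]
    refine Finset.sum_nonneg fun i _ => ?_
    rw [Matrix.diag_apply, Matrix.mul_apply]
    refine Finset.sum_nonneg fun j _ => ?_
    simpa [Matrix.conjTranspose_apply] using star_mul_self_nonneg (M j i)
  -- key trace identity
  have hsbsb : (s * b * s * b).trace = (s * a * s * a).trace - t ^ 2 := by
    simp only [hb, Matrix.mul_sub, Matrix.sub_mul, Matrix.mul_smul, Matrix.smul_mul,
      Matrix.mul_one, Matrix.one_mul, trace_sub, trace_smul, smul_smul, smul_eq_mul]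
    have h1 : (s * a * s).trace = t := by
      rw [trace_mul_cycle, hss]
    have h2 : (s * s * a).trace = t := by rw [hss]
    have h3 : (s * s).trace = 1 := by rw [hss, htr]
    rw [h1, h2, h3]
    ring
  have hrbb : (ρ * (b * b)).trace = (ρ * (a * a)).trace - t ^ 2 := by
    simp only [hb, Matrix.mul_sub, Matrix.sub_mul, Matrix.mul_smul, Matrix.smul_mul,
      Matrix.mul_one, Matrix.one_mul, trace_sub, trace_smul, smul_smul, smul_eq_mul]
    rw [htr]
    ring
  have key : (Mᴴ * M).trace
      = 2 * ((ρ * (a * a)).trace + (s * a * s * a).trace - 2 * t ^ 2) := by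
    rw [hMH, hM]
    have expand : (s * b + b * s) * (s * b + b * s)
        = s * b * s * b + s * b * (b * s) + b * s * (s * b) + b * s * (b * s) := by
      noncomm_ring
    rw [expand]
    simp only [trace_add]
    have e1 : (s * b * (b * s)).trace = (ρ * (b * b)).trace := by
      rw [← Matrix.mul_assoc, trace_mul_cycle, ← Matrix.mul_assoc s s b, hss, Matrix.mul_assoc]
    have e2 : (b * s * (s * b)).trace = (ρ * (b * b)).trace := by
      rw [Matrix.mul_assoc, trace_mul_comm, ← Matrix.mul_assoc s s b, hss, Matrix.mul_assoc]
    have e3 : (b * s * (b * s)).trace = (s * b * s * b).trace := by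
      rw [Matrix.mul_assoc, trace_mul_comm, ← Matrix.mul_assoc s b s]
    rw [e1, e2, e3, hsbsb, hrbb]
    ring
  rw [key] at hnn
  have hhalf : (0 : ℂ) ≤ 2⁻¹ := by
    rw [show ((2:ℂ))⁻¹ = ((2⁻¹ : ℝ) : ℂ) by norm_num]
    exact_mod_cast (by norm_num : (0:ℝ) ≤ 2⁻¹)
  have h2 : (0 : ℂ) ≤ (ρ * (a * a)).trace + (s * a * s * a).trace - 2 * t ^ 2 := by
    have h3 := mul_nonneg hhalf hnn
    rwa [← mul_assoc, inv_mul_cancel₀ (two_ne_zero), one_mul] at h3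
  exact (Complex.le_def.mp h2).1
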